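/- If f is twice differentiable on an open interval containing [0,1] with f'' bounded and integrable, then the Simpson rule error satisfies |∫₀¹ f(t) dt - (1/6) f(0) - (2/3) f(1/2) - (1/6) f(1)| ≤ (1/81) · sup_{t ∈ [0,1]} |f''(t)|. -/

import Mathlib

open MeasureTheory Real Set

/-- Derivative of a quadratic. -/
lemma simpson_hderiv2 (p q r x : ℝ) :
    HasDerivAt (fun t : ℝ => p * t ^ 2 + q * t + r) (2 * p * x + q) x := by
  have h := (((hasDerivAt_pow 2 x).const_mul p).add
      ((hasDerivAt_id x).const_mul q)).add_const r
  exact h.congr_deriv (by push_cast; ring)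

/-- Integral of a quadratic. -/
lemma simpson_intpoly (p q r a b : ℝ) :
    ∫ t in a..b, (p * t ^ 2 + q * t + r)
      = (p / 3 * b ^ 3 + q / 2 * b ^ 2 + r * b)
        - (p / 3 * a ^ 3 + q / 2 * a ^ 2 + r * a) := by
  apply intervalIntegral.integral_eq_sub_of_hasDerivAt
  · intro x _
    have h := ((((hasDerivAt_pow 3 x).const_mul (p / 3)).add
        ((hasDerivAt_pow 2 x).const_mul (q / 2))).add
        ((hasDerivAt_id x).const_mul r))
    exact h.congr_deriv (by push_cast; ring)
  · exact (Continuous.intervalIntegrable (by continuity) a b)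

/-- bound on |∫| by integral of a dominating function. -/
lemma simpson_abs_int_le (h φ : ℝ → ℝ) (a b : ℝ) (hab : a ≤ b)
    (hh : IntervalIntegrable h volume a b) (hφ : IntervalIntegrable φ volume a b)
    (hle : ∀ t ∈ Icc a b, |h t| ≤ φ t) :
    |∫ t in a..b, h t| ≤ ∫ t in a..b, φ t :=
  (intervalIntegral.abs_integral_le_integral_abs hab).trans
    (intervalIntegral.integral_mono_on hab hh.abs hφ hle)

set_option maxHeartbeats 1000000 in
theorem stmt_5 (f f' f'' : ℝ → ℝ) (c d : ℝ)
    (hsub : Icc (0:ℝ) 1 ⊆ Ioo c d)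
    (hd1 : ∀ t ∈ Ioo c d, HasDerivAt f (f' t) t)
    (hd2 : ∀ t ∈ Ioo c d, HasDerivAt f' (f'' t) t)
    (hbd : ∃ M, ∀ t ∈ Ioo c d, |f'' t| ≤ M)
    (hint : IntervalIntegrable f'' volume 0 1) :
    |(∫ t in (0:ℝ)..1, f t) - (1/6) * f 0
        - (2/3) * f (1/2) - (1/6) * f 1|
      ≤ (1/81) * sSup ((fun t => |f'' t|) '' Icc (0:ℝ) 1) := by
  set M := sSup ((fun t => |f'' t|) '' Icc (0:ℝ) 1) with hMdef
  -- bound by M on [0,1]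
  obtain ⟨M₀, hM₀⟩ := hbd
  have hbdd : BddAbove ((fun t => |f'' t|) '' Icc (0:ℝ) 1) := by
    refine ⟨M₀, ?_⟩
    rintro y ⟨t, ht, rfl⟩
    exact hM₀ t (hsub ht)
  have hM : ∀ t ∈ Icc (0:ℝ) 1, |f'' t| ≤ M := fun t ht =>
    le_csSup hbdd ⟨t, ht, rfl⟩
  have hM0 : 0 ≤ M := le_trans (abs_nonneg _) (hM 0 (by norm_num))
  -- continuity of f and f' on [0,1]
  have hfc : ContinuousOn f (Icc (0:ℝ) 1) := fun t ht =>
    ((hd1 t (hsub ht)).continuousAt).continuousWithinAt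
  have hf'c : ContinuousOn f' (Icc (0:ℝ) 1) := fun t ht =>
    ((hd2 t (hsub ht)).continuousAt).continuousWithinAt
  -- subinterval memberships
  have hsubIcc : ∀ a b : ℝ, 0 ≤ a → a ≤ b → b ≤ 1 → Icc a b ⊆ Icc (0:ℝ) 1 :=
    fun a b ha hab hb => Icc_subset_Icc ha hb
  have huIcc : ∀ a b : ℝ, 0 ≤ a → a ≤ b → b ≤ 1 → uIcc a b ⊆ Icc (0:ℝ) 1 := by
    intro a b ha hab hb
    rw [uIcc_of_le hab]
    exact Icc_subset_Icc ha hb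
  -- integrability on subintervals
  have hfint : ∀ a b : ℝ, 0 ≤ a → a ≤ b → b ≤ 1 → IntervalIntegrable f volume a b :=
    fun a b ha hab hb => (hfc.mono (huIcc a b ha hab hb)).intervalIntegrable
  have hf''int : ∀ a b : ℝ, 0 ≤ a → a ≤ b → b ≤ 1 → IntervalIntegrable f'' volume a b := by
    intro a b ha hab hb
    refine hint.mono_set ?_
    rw [uIcc_of_le hab, uIcc_of_le (by norm_num : (0:ℝ) ≤ 1)]
    exact Icc_subset_Icc ha hb
  -- kernels
  set K₁ : ℝ → ℝ := fun t => (1/2) * t ^ 2 + (-1/6) * t + 0 with hK₁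
  set K₂ : ℝ → ℝ := fun t => (1/2) * t ^ 2 + (-5/6) * t + 1/3 with hK₂
  have hK₁c : Continuous K₁ := by rw [hK₁]; fun_prop
  have hK₂c : Continuous K₂ := by rw [hK₂]; fun_prop
  -- products with f'' integrable
  have hprod : ∀ (K : ℝ → ℝ), Continuous K → ∀ a b : ℝ, 0 ≤ a → a ≤ b → b ≤ 1 →
      IntervalIntegrable (fun t => K t * f'' t) volume a b := by
    intro K hK a b ha hab hb
    exact (hf''int a b ha hab hb).continuousOn_mul hK.continuousOn
  have hf'int : ∀ a b : ℝ, 0 ≤ a → a ≤ b → b ≤ 1 → IntervalIntegrable f' volume a b :=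
    fun a b ha hab hb => (hf'c.mono (huIcc a b ha hab hb)).intervalIntegrable
  have hmemA : ∀ x ∈ uIcc (0:ℝ) (1/2), x ∈ Ioo c d := fun x hx =>
    hsub (huIcc 0 (1/2) (by norm_num) (by norm_num) (by norm_num) hx)
  have hmemB : ∀ x ∈ uIcc (1/2:ℝ) 1, x ∈ Ioo c d := fun x hx =>
    hsub (huIcc (1/2) 1 (by norm_num) (by norm_num) (by norm_num) hx)
  -- first integration by parts (left piece)
  have hA1 : ∫ t in (0:ℝ)..(1/2), K₁ t * f'' t
      = K₁ (1/2) * f' (1/2) - K₁ 0 * f' 0 - ∫ t in (0:ℝ)..(1/2), (t - 1/6) * f' t := by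
    apply intervalIntegral.integral_mul_deriv_eq_deriv_mul
      (u' := fun t => t - 1/6)
    · intro x _
      have h := simpson_hderiv2 (1/2) (-1/6) 0 x
      rw [hK₁]
      exact h.congr_deriv (by ring)
    · intro x hx; exact hd2 x (hmemA x hx)
    · exact Continuous.intervalIntegrable (by fun_prop) _ _
    · exact hf''int 0 (1/2) (by norm_num) (by norm_num) (by norm_num)
  -- second integration by parts (left piece)
  have hA2 : ∫ t in (0:ℝ)..(1/2), (t - 1/6) * f' t
      = ((1:ℝ)/2 - 1/6) * f (1/2) - ((0:ℝ) - 1/6) * f 0 - ∫ t in (0:ℝ)..(1/2), 1 * f t := by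
    apply intervalIntegral.integral_mul_deriv_eq_deriv_mul
      (u := fun t => t - 1/6) (u' := fun _ => 1)
    · intro x _; simpa using (hasDerivAt_id x).sub_const (1/6)
    · intro x hx; exact hd1 x (hmemA x hx)
    · exact intervalIntegrable_const
    · exact hf'int 0 (1/2) (by norm_num) (by norm_num) (by norm_num)
  -- first integration by parts (right piece)
  have hB1 : ∫ t in (1/2:ℝ)..1, K₂ t * f'' t
      = K₂ 1 * f' 1 - K₂ (1/2) * f' (1/2) - ∫ t in (1/2:ℝ)..1, (t - 5/6) * f' t := by
    apply intervalIntegral.integral_mul_deriv_eq_deriv_mul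
      (u' := fun t => t - 5/6)
    · intro x _
      have h := simpson_hderiv2 (1/2) (-5/6) (1/3) x
      rw [hK₂]
      exact h.congr_deriv (by ring)
    · intro x hx; exact hd2 x (hmemB x hx)
    · exact Continuous.intervalIntegrable (by fun_prop) _ _
    · exact hf''int (1/2) 1 (by norm_num) (by norm_num) (by norm_num)
  -- second integration by parts (right piece)
  have hB2 : ∫ t in (1/2:ℝ)..1, (t - 5/6) * f' t
      = ((1:ℝ) - 5/6) * f 1 - ((1:ℝ)/2 - 5/6) * f (1/2) - ∫ t in (1/2:ℝ)..1, 1 * f t := by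
    apply intervalIntegral.integral_mul_deriv_eq_deriv_mul
      (u := fun t => t - 5/6) (u' := fun _ => 1)
    · intro x _; simpa using (hasDerivAt_id x).sub_const (5/6)
    · intro x hx; exact hd1 x (hmemB x hx)
    · exact intervalIntegrable_const
    · exact hf'int (1/2) 1 (by norm_num) (by norm_num) (by norm_num)
  have hsplitf : (∫ t in (0:ℝ)..(1/2), f t) + ∫ t in (1/2:ℝ)..1, f t
      = ∫ t in (0:ℝ)..1, f t :=
    intervalIntegral.integral_add_adjacent_intervals
      (hfint 0 (1/2) (by norm_num) (by norm_num) (by norm_num))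
      (hfint (1/2) 1 (by norm_num) (by norm_num) (by norm_num))
  have hone : ∀ a b : ℝ, (∫ t in a..b, 1 * f t) = ∫ t in a..b, f t := by
    intro a b; simp
  -- the Peano kernel identity
  have hE : (∫ t in (0:ℝ)..1, f t) - (1/6) * f 0 - (2/3) * f (1/2) - (1/6) * f 1
      = (∫ t in (0:ℝ)..(1/2), K₁ t * f'' t) + ∫ t in (1/2:ℝ)..1, K₂ t * f'' t := by
    rw [hA1, hA2, hB1, hB2, hone, hone, ← hsplitf]
    have e1 : K₁ (1/2) = 1/24 := by rw [hK₁]; norm_num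
    have e2 : K₁ 0 = 0 := by rw [hK₁]; norm_num
    have e3 : K₂ 1 = 0 := by rw [hK₂]; norm_num
    have e4 : K₂ (1/2) = 1/24 := by rw [hK₂]; norm_num
    rw [e1, e2, e3, e4]
    ring
  rw [hE]
  -- split the two kernel integrals at the kernels' sign changes
  have hsA : (∫ t in (0:ℝ)..(1/3), K₁ t * f'' t) + ∫ t in (1/3:ℝ)..(1/2), K₁ t * f'' t
      = ∫ t in (0:ℝ)..(1/2), K₁ t * f'' t :=
    intervalIntegral.integral_add_adjacent_intervals
      (hprod K₁ hK₁c 0 (1/3) (by norm_num) (by norm_num) (by norm_num))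
      (hprod K₁ hK₁c (1/3) (1/2) (by norm_num) (by norm_num) (by norm_num))
  have hsB : (∫ t in (1/2:ℝ)..(2/3), K₂ t * f'' t) + ∫ t in (2/3:ℝ)..1, K₂ t * f'' t
      = ∫ t in (1/2:ℝ)..1, K₂ t * f'' t :=
    intervalIntegral.integral_add_adjacent_intervals
      (hprod K₂ hK₂c (1/2) (2/3) (by norm_num) (by norm_num) (by norm_num))
      (hprod K₂ hK₂c (2/3) 1 (by norm_num) (by norm_num) (by norm_num))
  rw [← hsA, ← hsB]
  -- bound each of the four pieces by M/324
  have hquadint : ∀ p q r : ℝ, IntervalIntegrable (fun t => p * t ^ 2 + q * t + r) volume 0 1 :=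
    fun p q r => Continuous.intervalIntegrable (by fun_prop) _ _
  have bd : ∀ (K : ℝ → ℝ), Continuous K →
      ∀ (p q r a b : ℝ), 0 ≤ a → a ≤ b → b ≤ 1 →
      (∀ t ∈ Icc a b, |K t| ≤ p * t ^ 2 + q * t + r) →
      |∫ t in a..b, K t * f'' t|
        ≤ M * ((p / 3 * b ^ 3 + q / 2 * b ^ 2 + r * b)
            - (p / 3 * a ^ 3 + q / 2 * a ^ 2 + r * a)) := by
    intro K hK p q r a b ha hab hb habs
    have h1 : |∫ t in a..b, K t * f'' t|
        ≤ ∫ t in a..b, (M * p) * t ^ 2 + (M * q) * t + (M * r) := by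
      apply simpson_abs_int_le _ _ a b hab (hprod K hK a b ha hab hb)
        (Continuous.intervalIntegrable (by fun_prop) _ _)
      intro t ht
      have h2 := hM t (Icc_subset_Icc ha hb ht)
      have h3 := habs t ht
      have h4 : (0:ℝ) ≤ |K t| := abs_nonneg _
      have h5 : (0:ℝ) ≤ |f'' t| := abs_nonneg _
      rw [abs_mul]
      nlinarith [mul_le_mul h3 h2 h5 (le_trans h4 h3)]
    calc |∫ t in a..b, K t * f'' t|
        ≤ ∫ t in a..b, (M * p) * t ^ 2 + (M * q) * t + (M * r) := h1
      _ = M * ((p / 3 * b ^ 3 + q / 2 * b ^ 2 + r * b)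
            - (p / 3 * a ^ 3 + q / 2 * a ^ 2 + r * a)) := by
          rw [simpson_intpoly]; ring
  have b1 : |∫ t in (0:ℝ)..(1/3), K₁ t * f'' t| ≤ M * (1/324) := by
    have h := bd K₁ hK₁c (-(1/2)) (1/6) 0 0 (1/3) (by norm_num) (by norm_num) (by norm_num) ?_
    · calc |∫ t in (0:ℝ)..(1/3), K₁ t * f'' t| ≤ _ := h
        _ = M * (1/324) := by norm_num
    · intro t ht
      have h0 := ht.1; have h1 := ht.2
      have hneg : K₁ t ≤ 0 := by rw [hK₁]; simp only []; nlinarith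
      rw [abs_of_nonpos hneg, hK₁]
      simp only []
      nlinarith
  have b2 : |∫ t in (1/3:ℝ)..(1/2), K₁ t * f'' t| ≤ M * (1/324) := by
    have h := bd K₁ hK₁c (1/2) (-(1/6)) 0 (1/3) (1/2) (by norm_num) (by norm_num) (by norm_num) ?_
    · calc |∫ t in (1/3:ℝ)..(1/2), K₁ t * f'' t| ≤ _ := h
        _ = M * (1/324) := by norm_num
    · intro t ht
      have h0 := ht.1; have h1 := ht.2
      have hpos : 0 ≤ K₁ t := by
        rw [hK₁]; simp only []
        nlinarith [mul_nonneg (by linarith : (0:ℝ) ≤ t - 1/3) (by linarith : (0:ℝ) ≤ t)]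
      rw [abs_of_nonneg hpos, hK₁]
      simp only []
      nlinarith
  have b3 : |∫ t in (1/2:ℝ)..(2/3), K₂ t * f'' t| ≤ M * (1/324) := by
    have h := bd K₂ hK₂c (1/2) (-(5/6)) (1/3) (1/2) (2/3) (by norm_num) (by norm_num) (by norm_num) ?_
    · calc |∫ t in (1/2:ℝ)..(2/3), K₂ t * f'' t| ≤ _ := h
        _ = M * (1/324) := by norm_num
    · intro t ht
      have h0 := ht.1; have h1 := ht.2
      have hpos : 0 ≤ K₂ t := by
        rw [hK₂]; simp only []
        nlinarith [mul_nonneg (by linarith : (0:ℝ) ≤ 1 - t) (by linarith : (0:ℝ) ≤ 2/3 - t)]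
      rw [abs_of_nonneg hpos, hK₂]
      simp only []
      nlinarith
  have b4 : |∫ t in (2/3:ℝ)..1, K₂ t * f'' t| ≤ M * (1/324) := by
    have h := bd K₂ hK₂c (-(1/2)) (5/6) (-(1/3)) (2/3) 1 (by norm_num) (by norm_num) (by norm_num) ?_
    · calc |∫ t in (2/3:ℝ)..1, K₂ t * f'' t| ≤ _ := h
        _ = M * (1/324) := by norm_num
    · intro t ht
      have h0 := ht.1; have h1 := ht.2
      have hneg : K₂ t ≤ 0 := by
        rw [hK₂]; simp only []
        nlinarith [mul_nonneg (by linarith : (0:ℝ) ≤ 1 - t) (by linarith : (0:ℝ) ≤ t - 2/3)]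
      rw [abs_of_nonpos hneg, hK₂]
      simp only []
      nlinarith
  calc |((∫ t in (0:ℝ)..(1/3), K₁ t * f'' t) + ∫ t in (1/3:ℝ)..(1/2), K₁ t * f'' t)
        + ((∫ t in (1/2:ℝ)..(2/3), K₂ t * f'' t) + ∫ t in (2/3:ℝ)..1, K₂ t * f'' t)|
      ≤ |(∫ t in (0:ℝ)..(1/3), K₁ t * f'' t) + ∫ t in (1/3:ℝ)..(1/2), K₁ t * f'' t|
        + |(∫ t in (1/2:ℝ)..(2/3), K₂ t * f'' t) + ∫ t in (2/3:ℝ)..1, K₂ t * f'' t| :=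
        abs_add_le _ _
    _ ≤ (|∫ t in (0:ℝ)..(1/3), K₁ t * f'' t| + |∫ t in (1/3:ℝ)..(1/2), K₁ t * f'' t|)
        + (|∫ t in (1/2:ℝ)..(2/3), K₂ t * f'' t| + |∫ t in (2/3:ℝ)..1, K₂ t * f'' t|) :=
        add_le_add (abs_add_le _ _) (abs_add_le _ _)
    _ ≤ (M * (1/324) + M * (1/324)) + (M * (1/324) + M * (1/324)) :=
        add_le_add (add_le_add b1 b2) (add_le_add b3 b4)
    _ = (1/81) * M := by ring
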